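/- For c > 0, the 2+4 product model on ℝ⁶ with μ = 3 and λ = c⁻¹ (modeling S²(curvature 3) × S⁴(curvature c⁻¹)) satisfies L₁ = 12(3 + c⁻¹)²(3 − 3c⁻¹); in particular, as a function of c, L₁ vanishes at c = 1 but its derivative at c = 1 is nonzero. -/

import Mathlib

open Finset

/-- Kulkarni–Nomizu product of two 2-tensors: (S∧T)_{ijkl}. -/
def KN {n : ℕ} (S T : Fin n → Fin n → ℝ) : Fin n → Fin n → Fin n → Fin n → ℝ :=
  fun i j k l => S i k * T j l + S j l * T i k - S i l * T j k - S j k * T i l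

/-- Composition of 2-tensors (as endomorphisms, indices raised by the standard metric). -/
noncomputable def comp2 {n : ℕ} (S T : Fin n → Fin n → ℝ) : Fin n → Fin n → ℝ :=
  fun i j => ∑ u, S i u * T u j

/-- Composition of curvature-type 4-tensors: (A∘B)_{ijkl} = (1/2) A_{ij}^{uv} B_{uvkl}. -/
noncomputable def comp4 {n : ℕ} (A B : Fin n → Fin n → Fin n → Fin n → ℝ) :
    Fin n → Fin n → Fin n → Fin n → ℝ :=
  fun i j k l => (1 / 2 : ℝ) * ∑ u, ∑ v, A i j u v * B u v k l

/-- Partial (Ricci-type) trace of a 4-tensor: (tr A)_{ij} = A_{iuj}^{u}. -/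
noncomputable def ptr {n : ℕ} (A : Fin n → Fin n → Fin n → Fin n → ℝ) :
    Fin n → Fin n → ℝ :=
  fun i j => ∑ u, A i u j u

/-- Full trace of a 2-tensor. -/
noncomputable def tr2 {n : ℕ} (S : Fin n → Fin n → ℝ) : ℝ := ∑ i, S i i

/-- Inner product of 2-tensors (standard metric). -/
noncomputable def inner2 {n : ℕ} (S T : Fin n → Fin n → ℝ) : ℝ := ∑ i, ∑ j, S i j * T i j

/-- The first-factor metric on ℝ^m ⊕ ℝ^{6-m} ≅ ℝ⁶, extended by zero. -/
def g6 (m : ℕ) : Fin 6 → Fin 6 → ℝ := fun i j => if i = j ∧ (i : ℕ) < m then 1 else 0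

/-- The second-factor metric on ℝ^m ⊕ ℝ^{6-m} ≅ ℝ⁶, extended by zero. -/
def h6 (m : ℕ) : Fin 6 → Fin 6 → ℝ := fun i j => if i = j ∧ m ≤ (i : ℕ) then 1 else 0

/-- The standard inner product ḡ on ℝ⁶. -/
def gb6 : Fin 6 → Fin 6 → ℝ := fun i j => if i = j then 1 else 0

/-- Curvature model of a product of spaceforms of dimensions m and 6−m with
sectional curvatures μ and ν: R = (μ/2) g∧g + (ν/2) h∧h. -/
noncomputable def Rm (m : ℕ) (μ ν : ℝ) : Fin 6 → Fin 6 → Fin 6 → Fin 6 → ℝ :=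
  fun i j k l => (μ / 2) * KN (g6 m) (g6 m) i j k l + (ν / 2) * KN (h6 m) (h6 m) i j k l

/-- J = tr_ḡ(Ric)/10 in dimension six. -/
noncomputable def Jm (m : ℕ) (μ ν : ℝ) : ℝ := tr2 (ptr (Rm m μ ν)) / 10

/-- Schouten tensor P = (Ric − Jḡ)/4 in dimension six. -/
noncomputable def Pm (m : ℕ) (μ ν : ℝ) : Fin 6 → Fin 6 → ℝ :=
  fun i j => (ptr (Rm m μ ν) i j - Jm m μ ν * gb6 i j) / 4

/-- Trace-free Schouten tensor E = P − (J/6)ḡ. -/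
noncomputable def Em (m : ℕ) (μ ν : ℝ) : Fin 6 → Fin 6 → ℝ :=
  fun i j => Pm m μ ν i j - (Jm m μ ν / 6) * gb6 i j

/-- Weyl tensor W = R − P∧ḡ. -/
noncomputable def Wm (m : ℕ) (μ ν : ℝ) : Fin 6 → Fin 6 → Fin 6 → Fin 6 → ℝ :=
  fun i j k l => Rm m μ ν i j k l - KN (Pm m μ ν) gb6 i j k l

/-- W² = W∘W. -/
noncomputable def W2m (m : ℕ) (μ ν : ℝ) := comp4 (Wm m μ ν) (Wm m μ ν)

/-- W³ = W∘W∘W. -/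
noncomputable def W3m (m : ℕ) (μ ν : ℝ) := comp4 (Wm m μ ν) (W2m m μ ν)

/-- Q = −(40/9)J³ + 16J|E|² − 16 tr E³ − 8 W_{ijkl}E^{ik}E^{jl}. -/
noncomputable def Qm (m : ℕ) (μ ν : ℝ) : ℝ :=
  -(40 / 9) * (Jm m μ ν) ^ 3 + 16 * Jm m μ ν * inner2 (Em m μ ν) (Em m μ ν)
    - 16 * tr2 (comp2 (Em m μ ν) (comp2 (Em m μ ν) (Em m μ ν)))
    - 8 * ∑ i, ∑ j, ∑ k, ∑ l, Wm m μ ν i j k l * Em m μ ν i k * Em m μ ν j l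

/-- L₁ = 96⟨E, tr W²⟩. -/
noncomputable def L1m (m : ℕ) (μ ν : ℝ) : ℝ := 96 * inner2 (Em m μ ν) (ptr (W2m m μ ν))

/-- L₂ = 16⟨E, tr W²⟩ − (4/3) J tr² W². -/
noncomputable def L2m (m : ℕ) (μ ν : ℝ) : ℝ :=
  16 * inner2 (Em m μ ν) (ptr (W2m m μ ν)) - (4 / 3) * Jm m μ ν * tr2 (ptr (W2m m μ ν))

/-- L₃ = 4 tr² W³. -/
noncomputable def L3m (m : ℕ) (μ ν : ℝ) : ℝ := 4 * tr2 (ptr (W3m m μ ν))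

/-- L₁ of the model S²(curvature 3) × S⁴(curvature c⁻¹), as a function of c. -/
noncomputable def L1fun : ℝ → ℝ := fun c => L1m 2 3 c⁻¹


section auxL1
set_option maxHeartbeats 2000000

private lemma gb_eq (i j : Fin 6) : gb6 i j = g6 2 i j + h6 2 i j := by
  fin_cases i <;> fin_cases j <;> simp (config := { decide := true }) [gb6, g6, h6]

private lemma J_eq (x : ℝ) : Jm 2 3 x = (3 + 6*x)/5 := by
  simp (config := { decide := true }) only [if_true, if_false, Jm, tr2, ptr, Rm, KN,
    Fin.sum_univ_six, g6, h6]
  ring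

private lemma P_eq (x : ℝ) (i j : Fin 6) :
    Pm 2 3 x i j = (6 - 3*x)/10 * g6 2 i j + (9*x - 3)/20 * h6 2 i j := by
  fin_cases i <;> fin_cases j <;>
    simp (config := { decide := true }) only [if_true, if_false, Pm, J_eq, ptr, Rm, KN,
      Fin.sum_univ_six, g6, h6, gb6] <;> ring

private lemma E_eq (x : ℝ) (i j : Fin 6) :
    Em 2 3 x i j = (1-x)/2 * g6 2 i j + (x-1)/4 * h6 2 i j := by
  simp only [Em, P_eq, J_eq, gb_eq]; ring

private lemma W_eq (x : ℝ) (i j k l : Fin 6) :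
    Wm 2 3 x i j k l = (9+3*x)/10 * KN (g6 2) (g6 2) i j k l
      + (3+x)/20 * KN (h6 2) (h6 2) i j k l
      - (9+3*x)/20 * KN (g6 2) (h6 2) i j k l := by
  simp only [Wm, Rm, KN, P_eq, gb_eq]; ring

private lemma ptrW2_0 (x : ℝ) : ptr (W2m 2 3 x) 0 0 = 9*(3+x)^2/20 := by
  simp (config := { decide := true }) only [if_true, if_false, ptr, W2m, comp4,
    Fin.sum_univ_six, W_eq, KN, g6, h6]
  ring

private lemma ptrW2_1 (x : ℝ) : ptr (W2m 2 3 x) 1 1 = 9*(3+x)^2/20 := by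
  simp (config := { decide := true }) only [if_true, if_false, ptr, W2m, comp4,
    Fin.sum_univ_six, W_eq, KN, g6, h6]
  ring

private lemma ptrW2_2 (x : ℝ) : ptr (W2m 2 3 x) 2 2 = 3*(3+x)^2/40 := by
  simp (config := { decide := true }) only [if_true, if_false, ptr, W2m, comp4,
    Fin.sum_univ_six, W_eq, KN, g6, h6]
  ring

private lemma ptrW2_3 (x : ℝ) : ptr (W2m 2 3 x) 3 3 = 3*(3+x)^2/40 := by
  simp (config := { decide := true }) only [if_true, if_false, ptr, W2m, comp4,
    Fin.sum_univ_six, W_eq, KN, g6, h6]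
  ring

private lemma ptrW2_4 (x : ℝ) : ptr (W2m 2 3 x) 4 4 = 3*(3+x)^2/40 := by
  simp (config := { decide := true }) only [if_true, if_false, ptr, W2m, comp4,
    Fin.sum_univ_six, W_eq, KN, g6, h6]
  ring

private lemma ptrW2_5 (x : ℝ) : ptr (W2m 2 3 x) 5 5 = 3*(3+x)^2/40 := by
  simp (config := { decide := true }) only [if_true, if_false, ptr, W2m, comp4,
    Fin.sum_univ_six, W_eq, KN, g6, h6]
  ring

private lemma L1_key (x : ℝ) : L1m 2 3 x = 12 * (3 + x) ^ 2 * (3 - 3 * x) := by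
  simp (config := { decide := true }) only [if_true, if_false, L1m, inner2,
    Fin.sum_univ_six, E_eq, g6, h6, ptrW2_0, ptrW2_1, ptrW2_2, ptrW2_3, ptrW2_4, ptrW2_5]
  ring

end auxL1

theorem stmt14 :
    (∀ c : ℝ, 0 < c → L1fun c = 12 * (3 + c⁻¹) ^ 2 * (3 - 3 * c⁻¹)) ∧
    L1fun 1 = 0 ∧ deriv L1fun 1 ≠ 0 := by
  have hfun : L1fun = fun c : ℝ => 324 - 108*c⁻¹ - 180*(c⁻¹)^2 - 36*(c⁻¹)^3 := by
    funext c
    rw [show L1fun c = L1m 2 3 c⁻¹ from rfl, L1_key]; ring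
  refine ⟨fun c _ => ?_, ?_, ?_⟩
  · exact L1_key c⁻¹
  · rw [show L1fun 1 = L1m 2 3 (1:ℝ)⁻¹ from rfl, L1_key]; norm_num
  · have h1 : HasDerivAt (fun c : ℝ => c⁻¹) (-1) 1 := by
      simpa using hasDerivAt_inv (one_ne_zero (α := ℝ))
    have H := (((hasDerivAt_const (1:ℝ) (324:ℝ)).sub (h1.const_mul 108)).sub
      ((h1.pow 2).const_mul 180)).sub ((h1.pow 3).const_mul 36)
    have h2 : HasDerivAt L1fun (576:ℝ) 1 := by
      rw [hfun]
      have e : (fun c : ℝ => 324 - 108*c⁻¹ - 180*(c⁻¹)^2 - 36*(c⁻¹)^3) =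
          ((((fun _ => (324:ℝ)) - fun y => 108 * y⁻¹) - fun y => 180 * ((fun c : ℝ => c⁻¹) ^ 2) y) -
            fun y => 36 * ((fun c : ℝ => c⁻¹) ^ 3) y) := by
        funext c; simp
      rw [e]
      exact H.congr_deriv (by norm_num)
    rw [h2.deriv]; norm_num
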